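/- For every α ∈ (0, π/2) there exist constants C₂ > 0 and R₁ > 0 such that the following holds: for all points A, B, B' ∈ ℝ² with B ≠ A, if dist(B, B') ≥ 1, the angle at the vertex B between the segments [B, B'] and [B, A] is at most α, and dist(B, B') ≤ C₂ · dist(B, A), then dist(B', A) ≤ dist(B, A) − R₁. -/
import Mathlib


open EuclideanGeometry Real

/-- For every α ∈ (0, π/2) there exist C₂ > 0 and R₁ > 0 such that for all
A, B, B' ∈ ℝ² with B ≠ A: if dist(B, B') ≥ 1, the angle ∠(B' B A) is at most α, and
dist(B, B') ≤ C₂ · dist(B, A), then dist(B', A) ≤ dist(B, A) − R₁. -/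
theorem stmt8 (α : ℝ) (hα : α ∈ Set.Ioo (0 : ℝ) (Real.pi / 2)) :
    ∃ C₂ > (0 : ℝ), ∃ R₁ > (0 : ℝ),
      ∀ A B B' : EuclideanSpace ℝ (Fin 2), B ≠ A →
        1 ≤ dist B B' →
        EuclideanGeometry.angle B' B A ≤ α →
        dist B B' ≤ C₂ * dist B A →
        dist B' A ≤ dist B A - R₁ := by
  obtain ⟨hα0, hα2⟩ := hα
  have hk : 0 < Real.cos α := by
    apply Real.cos_pos_of_mem_Ioo
    constructor
    · linarith [Real.pi_pos]
    · exact hα2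
  refine ⟨Real.cos α, hk, Real.cos α / 2, by linarith, ?_⟩
  intro A B B' hBA ht hθ hC
  have hlc := EuclideanGeometry.law_cos B' B A
  set a := dist B A with ha
  set t := dist B B' with htt
  set c := dist B' A with hc
  have hBB : dist B' B = t := dist_comm B' B
  rw [hBB, dist_comm A B] at hlc
  have hθ0 : 0 ≤ EuclideanGeometry.angle B' B A := EuclideanGeometry.angle_nonneg _ _ _
  have hθπ : EuclideanGeometry.angle B' B A ≤ Real.pi := EuclideanGeometry.angle_le_pi _ _ _
  have hcos : Real.cos α ≤ Real.cos (EuclideanGeometry.angle B' B A) :=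
    Real.cos_le_cos_of_nonneg_of_le_pi hθ0 (by linarith [Real.pi_pos]) hθ
  have ha0 : 0 < a := dist_pos.mpr hBA
  have hcosle1 : Real.cos α ≤ 1 := Real.cos_le_one α
  have hage : 1 ≤ Real.cos α * a := le_trans ht hC
  have hc0 : 0 ≤ c := dist_nonneg
  -- c^2 = t^2 + a^2 - 2*t*a*cosθ ≤ a^2 - t*(2*a*cosα - t) ≤ (a - cosα/2)^2
  have key : c ^ 2 ≤ (a - Real.cos α / 2) ^ 2 := by
    nlinarith [mul_le_mul_of_nonneg_left hcos (by positivity : (0:ℝ) ≤ 2 * t * a),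
      mul_le_mul_of_nonneg_left hC (by linarith : (0:ℝ) ≤ t),
      mul_le_mul_of_nonneg_left hage (by linarith : (0:ℝ) ≤ t), sq_nonneg (Real.cos α)]
  have han : 0 ≤ a - Real.cos α / 2 := by nlinarith
  nlinarith [key, hc0, han]
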